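/- Let Y ∈ {0,1}^{n×m} be a binary matrix whose column-sum vector r = Yᵀe satisfies the power law r_g = r_max · g^(−α) for g = 1,…,m with r_max > 0 and α > 1, and let (σ1, p1, q1) be a principal singular triple of Y with p1 entrywise nonnegative. Then cos(r, q1) ≥ σ1 · ⟨e, p1⟩ / (r_max · √ζ(2α)). -/

import Mathlib

open Matrix

/-- Riemann zeta function for real `s > 1`: `ζ(s) = ∑_{j=1}^∞ j^(−s)`. -/
noncomputable def zetaR (s : ℝ) : ℝ := ∑' j : ℕ, ((j : ℝ) + 1) ^ (-s)

/-- Euclidean (L2) norm of a vector. -/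
noncomputable def enorm {k : ℕ} (v : Fin k → ℝ) : ℝ := Real.sqrt (∑ i, v i ^ 2)

/-- Cosine similarity of two vectors. -/
noncomputable def vcos {k : ℕ} (x y : Fin k → ℝ) : ℝ :=
  (∑ i, x i * y i) / (_root_.enorm x * _root_.enorm y)

/-- Let `Y ∈ {0,1}^{n×m}` be a binary matrix whose column-sum vector
`r = Yᵀe` satisfies the power law `r_g = r_max · g^(−α)` with `r_max > 0` and `α > 1`,
and let `(σ1, p1, q1)` be a principal singular triple of `Y` with `p1` entrywise
nonnegative.  Then `cos(r, q1) ≥ σ1 · ⟨e, p1⟩ / (r_max · √ζ(2α))`. -/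
theorem cos_r_q1_lower_bound
    (n m : ℕ) (Y : Matrix (Fin n) (Fin m) ℝ)
    (hbin : ∀ u i, Y u i = 0 ∨ Y u i = 1)
    (α rmax : ℝ) (hα : 1 < α) (hrmax : 0 < rmax)
    (r : Fin m → ℝ) (hrdef : r = Yᵀ.mulVec (fun _ => 1))
    (hpow : ∀ g : Fin m, r g = rmax * (((g : ℕ) : ℝ) + 1) ^ (-α))
    (σ1 : ℝ) (p1 : Fin n → ℝ) (q1 : Fin m → ℝ)
    (hσnn : 0 ≤ σ1)
    (hop : ∀ q : Fin m → ℝ, _root_.enorm q = 1 → _root_.enorm (Y.mulVec q) ≤ σ1)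
    (hp1 : _root_.enorm p1 = 1) (hq1 : _root_.enorm q1 = 1)
    (hYq : Y.mulVec q1 = σ1 • p1) (hYp : Yᵀ.mulVec p1 = σ1 • q1)
    (hpnn : ∀ u, 0 ≤ p1 u) :
    vcos r q1 ≥ σ1 * (∑ u, p1 u) / (rmax * Real.sqrt (zetaR (2 * α))) := by
  have hm : 0 < m := by
    by_contra h
    push_neg at h
    interval_cases m
    simp [_root_.enorm] at hq1
  haveI : Nonempty (Fin m) := Fin.pos_iff_nonempty.mp hm
  -- numerator
  have hnum : ∑ i, r i * q1 i = σ1 * ∑ u, p1 u := by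
    have h1 : ∑ i, r i * q1 i = ∑ u, (Y.mulVec q1) u := by
      subst hrdef
      simp only [Matrix.mulVec, dotProduct, Matrix.transpose_apply, mul_one,
        Finset.sum_mul]
      exact Finset.sum_comm
    rw [h1, hYq]
    simp [Finset.mul_sum]
  -- summability and zeta bound
  have hsum : Summable (fun j : ℕ => ((j : ℝ) + 1) ^ (-(2 * α))) := by
    have h0 := Real.summable_nat_rpow.mpr (show -(2 * α) < -1 by linarith)
    have h := (summable_nat_add_iff 1).mpr h0
    simpa using h
  have hle : ∑ i : Fin m, (((i : ℕ) : ℝ) + 1) ^ (-(2 * α)) ≤ zetaR (2 * α) := by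
    unfold zetaR
    rw [Fin.sum_univ_eq_sum_range (fun j => ((j : ℝ) + 1) ^ (-(2 * α)))]
    exact Summable.sum_le_tsum (Finset.range m) (fun j _ => by positivity) hsum
  have hrsq : ∑ i, r i ^ 2 ≤ rmax ^ 2 * zetaR (2 * α) := by
    have heq : ∑ i, r i ^ 2 = rmax ^ 2 * ∑ i : Fin m, (((i : ℕ) : ℝ) + 1) ^ (-(2 * α)) := by
      rw [Finset.mul_sum]
      apply Finset.sum_congr rfl
      intro i _
      rw [hpow i]
      have hx : (0 : ℝ) < ((i : ℕ) : ℝ) + 1 := by positivity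
      rw [mul_pow, sq ((((i : ℕ) : ℝ) + 1) ^ (-α)), ← Real.rpow_add hx]
      congr 1
      ring
    rw [heq]
    exact mul_le_mul_of_nonneg_left hle (by positivity)
  have hrpos : 0 < ∑ i, r i ^ 2 := by
    apply Finset.sum_pos _ Finset.univ_nonempty
    intro i _
    rw [hpow i]
    positivity
  have henr : _root_.enorm r ≤ rmax * Real.sqrt (zetaR (2 * α)) := by
    unfold _root_.enorm
    rw [← Real.sqrt_sq hrmax.le, ← Real.sqrt_mul (by positivity)]
    exact Real.sqrt_le_sqrt hrsq
  have hpos : 0 < _root_.enorm r := Real.sqrt_pos.mpr hrpos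
  have hNnn : 0 ≤ σ1 * ∑ u, p1 u :=
    mul_nonneg hσnn (Finset.sum_nonneg fun u _ => hpnn u)
  unfold vcos
  rw [hq1, mul_one, hnum]
  exact div_le_div_of_nonneg_left hNnn hpos henr
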